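/- Let S¹ = {z ∈ ℂ : |z| = 1} be the circle group and suppose d : C(S¹,S¹) → ℤ is a function such that every continuous map x : S¹ → S¹ is homotopic to the map z ↦ z^{d(x)}. Fix points b, z₀ ∈ S¹. Then the map f_{b,z₀} : C(S¹,S¹) → S¹ defined by f_{b,z₀}(x) = z₀^{d(x)}·x(b) is a group homomorphism, and it is range decreasing: f_{b,z₀}(x) ∈ x(S¹) for every x ∈ C(S¹,S¹). -/

import Mathlib

open ContinuousMap

/-- The continuous map `S¹ → S¹`, `z ↦ z^k`. -/
noncomputable def circlePowMap (k : ℤ) : C(Circle, Circle) :=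
  ⟨fun z => z ^ k, continuous_id.zpow k⟩

open Complex Real Set

noncomputable section

namespace CircleWind

/-- `-1` as an element of the circle. -/
def negOne : Circle := ⟨-1, by simp [Submonoid.unitSphere]⟩

@[simp] lemma coe_negOne : (negOne : ℂ) = -1 := rfl

lemma coe_zpow (z : Circle) (k : ℤ) : ((z ^ k : Circle) : ℂ) = (z : ℂ) ^ k := by
  cases k with
  | ofNat n => simpa [zpow_natCast] using map_pow Circle.coeHom z n
  | negSucc n => simpa [zpow_negSucc] using map_pow Circle.coeHom z (n+1)

lemma exp_int_mul (k : ℤ) (t : ℝ) : Circle.exp ((k : ℝ) * t) = Circle.exp t ^ k := by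
  ext
  rw [coe_zpow, Circle.coe_exp, Circle.coe_exp, ← Complex.exp_int_mul]
  push_cast
  ring_nf

/-- Continuity of `arg` on the circle away from `-1`. -/
lemma continuousAt_argCoe {z : Circle} (hz : z ≠ negOne) :
    ContinuousAt (fun w : Circle => Complex.arg (w : ℂ)) z := by
  have hsq : (z : ℂ).re ^ 2 + (z : ℂ).im ^ 2 = 1 := by
    have h := Complex.sq_norm (z : ℂ)
    rw [Circle.norm_coe] at h
    simpa [Complex.normSq_apply, sq] using h.symm
  have hmem : (z : ℂ) ∈ Complex.slitPlane := by
    rw [Complex.mem_slitPlane_iff]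
    by_contra h
    push_neg at h
    obtain ⟨h1, h2⟩ := h
    apply hz
    apply Subtype.ext
    apply Complex.ext
    · simp only [coe_negOne, Complex.neg_re, Complex.one_re]
      nlinarith [hsq]
    · simp [h2]
  exact (Complex.continuousAt_arg hmem).comp continuous_subtype_val.continuousAt

/-- Points of the circle at distance < 2 are not antipodal. -/
lemma ne_negOne_of_dist_lt {z w : Circle} (h : dist z w < 2) : z / w ≠ negOne := by
  intro hzw
  have hz : (z : ℂ) = -(w : ℂ) := by
    have : ((z / w : Circle) : ℂ) = -1 := by rw [hzw]; rfl
    rw [Circle.coe_div, div_eq_iff (by exact_mod_cast Circle.coe_ne_zero w)] at this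
    simpa using this
  change dist (z:ℂ) (w:ℂ) < 2 at h
  rw [Complex.dist_eq, hz] at h
  have : ‖(-(w:ℂ) - w)‖ = 2 := by
    have : -(w:ℂ) - w = -(2 : ℂ) * w := by ring
    rw [this, norm_mul, Circle.norm_coe]
    simp
  linarith [this ▸ h]

end CircleWind

namespace CircleWind

lemma exp_sum (s : Finset ℕ) (f : ℕ → ℝ) :
    Circle.exp (∑ i ∈ s, f i) = ∏ i ∈ s, Circle.exp (f i) := by
  induction s using Finset.cons_induction with
  | empty => simp
  | cons a s ha ih => rw [Finset.sum_cons, Finset.prod_cons, Circle.exp_add, ih]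

lemma one_ne_negOne : (1 : Circle) ≠ negOne := by
  intro hc
  have := congrArg (fun z : Circle => (z:ℂ)) hc
  simp only [Circle.coe_one, coe_negOne] at this
  norm_num at this

/-- Existence of a continuous lift of a continuous map `ℝ → Circle` on `[0, 2π]`. -/
lemma exists_lift (ℓ : ℝ → Circle) (hℓ : Continuous ℓ) :
    ∃ F : ℝ → ℝ, Continuous F ∧ ∀ t ∈ Icc (0:ℝ) (2*π), Circle.exp (F t) = ℓ t := by
  have hπ : (0:ℝ) < 2*π := by positivity
  obtain ⟨δ, hδ, hmod⟩ := Metric.uniformContinuousOn_iff.mp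
    (isCompact_Icc.uniformContinuousOn_of_continuous (s := Icc (0:ℝ) (2*π)) hℓ.continuousOn)
    2 (by norm_num)
  obtain ⟨n, hn⟩ := exists_nat_gt (2*π/δ)
  have hn0 : 0 < (n:ℝ) := lt_trans (by positivity) hn
  set h : ℝ := 2*π/n with hh_def
  have hh0 : 0 < h := by positivity
  have hhδ : h < δ := by
    rw [hh_def, div_lt_iff₀ hn0]
    have := (div_lt_iff₀ hδ).mp hn
    nlinarith
  have hnh : (n:ℝ) * h = 2*π := by rw [hh_def]; field_simp
  -- the quotients stay away from -1
  have key : ∀ (t : ℝ) (j : ℕ), j < n →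
      ℓ (min t (((j:ℝ)+1)*h)) / ℓ (min t ((j:ℝ)*h)) ≠ negOne := by
    intro t j hj
    rcases le_total t ((j:ℝ)*h) with H | H
    · have e1 : min t (((j:ℝ)+1)*h) = t := min_eq_left (H.trans (by nlinarith))
      have e2 : min t ((j:ℝ)*h) = t := min_eq_left H
      rw [e1, e2, div_self']
      exact one_ne_negOne
    · set a := min t (((j:ℝ)+1)*h) with ha_def
      set b := min t ((j:ℝ)*h) with hb_def
      have hb : b = (j:ℝ)*h := min_eq_right H
      have hab1 : b ≤ a := min_le_min le_rfl (by nlinarith)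
      have hab2 : a - b ≤ h := by
        have : a ≤ ((j:ℝ)+1)*h := min_le_right _ _
        rw [hb]; nlinarith
      have hjn : (j:ℝ) + 1 ≤ n := by exact_mod_cast hj
      have hb0 : 0 ≤ b := by rw [hb]; positivity
      have haI : a ∈ Icc (0:ℝ) (2*π) := by
        refine ⟨hb0.trans hab1, le_trans (min_le_right _ _) (by nlinarith)⟩
      have hbI : b ∈ Icc (0:ℝ) (2*π) := by
        refine ⟨hb0, le_trans (min_le_right _ _) (by nlinarith)⟩
      refine ne_negOne_of_dist_lt ?_
      refine hmod _ haI _ hbI ?_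
      rw [Real.dist_eq, _root_.abs_of_nonneg (by linarith : (0:ℝ) ≤ a - b)]
      linarith
  -- the lift
  refine ⟨fun t => Complex.arg ((ℓ 0 : Circle) : ℂ) + ∑ j ∈ Finset.range n,
      Complex.arg ((ℓ (min t (((j:ℝ)+1)*h)) / ℓ (min t ((j:ℝ)*h)) : Circle) : ℂ), ?_, ?_⟩
  · refine continuous_const.add (continuous_finset_sum _ fun j hj => ?_)
    rw [continuous_iff_continuousAt]
    intro t
    have hq : Continuous fun t : ℝ =>
        ℓ (min t (((j:ℝ)+1)*h)) / ℓ (min t ((j:ℝ)*h)) :=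
      (hℓ.comp (continuous_id.min continuous_const)).div'
        (hℓ.comp (continuous_id.min continuous_const))
    exact ContinuousAt.comp (g := fun w : Circle => Complex.arg (w:ℂ))
      (continuousAt_argCoe (key t j (Finset.mem_range.mp hj))) hq.continuousAt
  · intro t ht
    rw [Circle.exp_add, exp_sum, Circle.exp_arg]
    have : ∀ j ∈ Finset.range n,
        Circle.exp (Complex.arg ((ℓ (min t (((j:ℝ)+1)*h)) / ℓ (min t ((j:ℝ)*h)) : Circle) : ℂ))
          = ℓ (min t (((j:ℝ)+1)*h)) / ℓ (min t ((j:ℝ)*h)) := fun j _ => Circle.exp_arg _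
    rw [Finset.prod_congr rfl this]
    have htel : ∏ j ∈ Finset.range n,
        (ℓ (min t (((j:ℝ)+1)*h)) / ℓ (min t ((j:ℝ)*h))) =
        ℓ (min t ((n:ℝ)*h)) / ℓ (min t (((0:ℕ):ℝ)*h)) := by
      have := Finset.prod_range_div (fun j : ℕ => ℓ (min t ((j:ℝ)*h))) n
      simpa using this
    rw [htel]
    have e1 : min t ((n:ℝ)*h) = t := by rw [hnh]; exact min_eq_left ht.2
    have e2 : min t (((0:ℕ):ℝ)*h) = 0 := by
      simp only [Nat.cast_zero, zero_mul]
      exact min_eq_right ht.1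
    rw [e1, e2]
    exact mul_div_cancel _ _

/-- Two lifts of the same map have the same increment over `[0, 2π]`. -/
lemma lift_increment_unique {F G : ℝ → ℝ} (hF : Continuous F) (hG : Continuous G)
    (h : ∀ t ∈ Icc (0:ℝ) (2*π), Circle.exp (F t) = Circle.exp (G t)) :
    F (2*π) - F 0 = G (2*π) - G 0 := by
  have hπ : (0:ℝ) < 2*π := by positivity
  set D : ℝ → ℝ := fun t => F t - G t with hD_def
  have hDc : Continuous D := hF.sub hG
  have hint : ∀ t ∈ Icc (0:ℝ) (2*π), ∃ k : ℤ, D t = k * (2*π) := by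
    intro t ht
    obtain ⟨m, hm⟩ := Circle.exp_eq_exp.mp (h t ht)
    exact ⟨m, by simp only [hD_def]; linarith⟩
  obtain ⟨k₀, hk₀⟩ := hint 0 ⟨le_rfl, by linarith⟩
  obtain ⟨k₁, hk₁⟩ := hint (2*π) ⟨by linarith, le_rfl⟩
  have hkk : k₀ = k₁ := by
    by_contra hne
    have hcast : ((k₀ ⊓ k₁ : ℤ) : ℝ) = min (k₀:ℝ) (k₁:ℝ) := by push_cast; rfl
    have hmem : ((k₀ ⊓ k₁ : ℤ) : ℝ) * (2*π) + π ∈ uIcc (D 0) (D (2*π)) := by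
      rw [hk₀, hk₁, mem_uIcc, hcast]
      rcases le_total k₀ k₁ with hle | hle
      · have h2 : (k₀:ℝ) + 1 ≤ k₁ := by
          exact_mod_cast Int.add_one_le_of_lt (lt_of_le_of_ne hle hne)
        rw [min_eq_left (Int.cast_le.mpr hle)]
        left
        constructor <;> nlinarith
      · have h2 : (k₁:ℝ) + 1 ≤ k₀ := by
          exact_mod_cast Int.add_one_le_of_lt (lt_of_le_of_ne hle (Ne.symm hne))
        rw [min_eq_right (Int.cast_le.mpr hle)]
        right
        constructor <;> nlinarith
    obtain ⟨u, hu, hDu⟩ := intermediate_value_uIcc (hDc.continuousOn (s := uIcc 0 (2*π))) hmem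
    have huI : u ∈ Icc (0:ℝ) (2*π) := by
      rwa [uIcc_of_le (by linarith : (0:ℝ) ≤ 2*π)] at hu
    obtain ⟨k, hk⟩ := hint u huI
    rw [hk, hcast] at hDu
    have hzero : ((2*k - 2*(k₀ ⊓ k₁) - 1 : ℤ) : ℝ) * π = 0 := by push_cast; linarith
    have h0 : (2*k - 2*(k₀ ⊓ k₁) - 1 : ℤ) ≠ 0 := by omega
    rcases mul_eq_zero.mp hzero with hzz | hzz
    · exact h0 (by exact_mod_cast hzz)
    · have := Real.pi_pos; linarith
  have e0 : F 0 - G 0 = (k₀:ℝ)*(2*π) := hk₀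
  have e1 : F (2*π) - G (2*π) = (k₁:ℝ)*(2*π) := hk₁
  rw [hkk] at e0
  linarith

/-- The loop associated to a continuous self-map of the circle. -/
def loop (x : C(Circle, Circle)) : ℝ → Circle := fun t => x (Circle.exp t)

lemma loop_continuous (x : C(Circle, Circle)) : Continuous (loop x) :=
  x.continuous.comp Circle.exp.continuous

/-- Total increment of the argument of `x` along the circle. -/
def windAux (x : C(Circle, Circle)) : ℝ :=
  (Classical.choose (exists_lift (loop x) (loop_continuous x))) (2*π) -
    (Classical.choose (exists_lift (loop x) (loop_continuous x))) 0

lemma windAux_eq (x : C(Circle, Circle)) {F : ℝ → ℝ} (hF : Continuous F)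
    (hlift : ∀ t ∈ Icc (0:ℝ) (2*π), Circle.exp (F t) = loop x t) :
    windAux x = F (2*π) - F 0 := by
  obtain ⟨hc, hl⟩ := Classical.choose_spec (exists_lift (loop x) (loop_continuous x))
  exact lift_increment_unique hc hF (fun t ht => (hl t ht).trans (hlift t ht).symm)

lemma windAux_mul (x y : C(Circle, Circle)) :
    windAux (x * y) = windAux x + windAux y := by
  obtain ⟨hcx, hlx⟩ := Classical.choose_spec (exists_lift (loop x) (loop_continuous x))
  obtain ⟨hcy, hly⟩ := Classical.choose_spec (exists_lift (loop y) (loop_continuous y))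
  set F := Classical.choose (exists_lift (loop x) (loop_continuous x))
  set G := Classical.choose (exists_lift (loop y) (loop_continuous y))
  have : windAux (x * y) = (F (2*π) + G (2*π)) - (F 0 + G 0) := by
    apply windAux_eq (x * y) (hcx.add hcy)
    intro t ht
    rw [Pi.add_apply, Circle.exp_add, hlx t ht, hly t ht]
    rfl
  rw [this]
  simp only [windAux]
  ring

lemma windAux_pow (k : ℤ) : windAux (circlePowMap k) = k * (2*π) := by
  have : windAux (circlePowMap k) = (k:ℝ) * (2*π) - (k:ℝ) * 0 := by
    apply windAux_eq _ (continuous_const.mul continuous_id)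
    intro t _
    show Circle.exp ((k:ℝ) * t) = _
    rw [exp_int_mul]
    rfl
  rw [this]; ring

lemma windAux_one : windAux 1 = 0 := by
  have h : (1 : C(Circle, Circle)) = circlePowMap 0 := by
    ext z
    simp [circlePowMap]
  rw [h, windAux_pow]
  simp

lemma windAux_inv (x : C(Circle, Circle)) : windAux x⁻¹ = - windAux x := by
  have := windAux_mul x x⁻¹
  rw [mul_inv_cancel, windAux_one] at this
  linarith

lemma windAux_of_not_surj (x : C(Circle, Circle)) {p : Circle} (hp : p ∉ Set.range x) :
    windAux x = 0 := by
  set w : Circle := negOne * p⁻¹ with hw_def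
  have hne : ∀ z : Circle, x z * w ≠ negOne := by
    intro z hz
    apply hp
    refine ⟨z, ?_⟩
    have : x z * (negOne * p⁻¹) = negOne := hz
    have h4 : p * (negOne * p⁻¹) = negOne := by
      rw [mul_comm negOne p⁻¹, ← mul_assoc, mul_inv_cancel, one_mul]
    exact mul_right_cancel (this.trans h4.symm)
  set F : ℝ → ℝ := fun t => Complex.arg ((loop x t * w : Circle) : ℂ) +
      Complex.arg ((w⁻¹ : Circle) : ℂ) with hF_def
  have hFc : Continuous F := by
    refine Continuous.add ?_ continuous_const
    rw [continuous_iff_continuousAt]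
    intro t
    exact ContinuousAt.comp (g := fun z : Circle => Complex.arg (z:ℂ))
      (continuousAt_argCoe (hne _)) (((loop_continuous x).mul continuous_const).continuousAt)
  have hlift : ∀ t ∈ Icc (0:ℝ) (2*π), Circle.exp (F t) = loop x t := by
    intro t _
    rw [hF_def]
    simp only
    rw [Circle.exp_add, Circle.exp_arg, Circle.exp_arg]
    rw [mul_assoc, mul_inv_cancel, mul_one]
  rw [windAux_eq x hFc hlift]
  have h0 : loop x 0 = loop x (2*π) := by
    simp only [loop]
    rw [Circle.exp_two_pi, Circle.exp_zero]
  rw [hF_def]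
  simp only
  rw [← h0]
  ring

lemma windAux_close (x y : C(Circle, Circle)) (h : ∀ z : Circle, dist (x z) (y z) < 2) :
    windAux x = windAux y := by
  have hmiss : negOne ∉ Set.range (⇑(x * y⁻¹)) := by
    rintro ⟨z, hz⟩
    have hz' : x z / y z = negOne := hz
    exact ne_negOne_of_dist_lt (h z) hz'
  have h0 : windAux (x * y⁻¹) = 0 := windAux_of_not_surj _ hmiss
  have := windAux_mul (x * y⁻¹) y
  rw [inv_mul_cancel_right, h0] at this
  linarith

lemma windAux_homotopic {x y : C(Circle, Circle)} (h : x.Homotopic y) :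
    windAux x = windAux y := by
  obtain ⟨H⟩ := h
  set w : unitInterval → ℝ := fun t => windAux (H.toContinuousMap.curry t) with hw_def
  have hlc : IsLocallyConstant w := by
    rw [IsLocallyConstant.iff_eventually_eq]
    intro t₀
    have hcont : Continuous fun t : unitInterval => H.toContinuousMap.curry t :=
      H.toContinuousMap.curry.continuous
    have htend := (hcont.tendsto t₀).dist (tendsto_const_nhds
      (x := H.toContinuousMap.curry t₀) (f := nhds t₀))
    have hev : ∀ᶠ t in nhds t₀,
        dist (H.toContinuousMap.curry t) (H.toContinuousMap.curry t₀) < 2 := by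
      have : Set.Iio (2:ℝ) ∈ nhds (dist (H.toContinuousMap.curry t₀)
          (H.toContinuousMap.curry t₀)) := by
        rw [dist_self]
        exact Iio_mem_nhds (by norm_num)
      exact htend this
    refine hev.mono fun t ht => ?_
    refine windAux_close _ _ fun z => lt_of_le_of_lt ?_ ht
    exact ContinuousMap.dist_apply_le_dist z
  have := hlc.apply_eq_of_preconnectedSpace 0 1
  rw [hw_def] at this
  simp only at this
  have h0 : H.toContinuousMap.curry 0 = x := by
    ext z
    simp [ContinuousMap.curry]
  have h1 : H.toContinuousMap.curry 1 = y := by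
    ext z
    simp [ContinuousMap.curry]
  rw [h0, h1] at this
  exact this

end CircleWind

end

open CircleWind

/-- Let `d : C(S¹,S¹) → ℤ` be a degree function (every `x` is homotopic to
`z ↦ z^{d x}`). For fixed `b, z₀ ∈ S¹`, the map `f_{b,z₀}(x) = z₀^{d x} * x b` is a range
decreasing group homomorphism. -/
theorem circle_degree_twisted_evaluation (d : C(Circle, Circle) → ℤ)
    (hd : ∀ x : C(Circle, Circle), x.Homotopic (circlePowMap (d x)))
    (b z₀ : Circle) :
    (∀ x y : C(Circle, Circle),
      z₀ ^ d (x * y) * (x * y) b = (z₀ ^ d x * x b) * (z₀ ^ d y * y b)) ∧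
    (∀ x : C(Circle, Circle), z₀ ^ d x * x b ∈ Set.range ⇑x) := by
  have hπ : (0:ℝ) < 2 * Real.pi := by positivity
  have hw : ∀ x : C(Circle, Circle), windAux x = (d x : ℝ) * (2 * Real.pi) := fun x =>
    (windAux_homotopic (hd x)).trans (windAux_pow (d x))
  constructor
  · intro x y
    have hd_add : d (x * y) = d x + d y := by
      have h1 := hw (x * y)
      rw [windAux_mul, hw x, hw y] at h1
      have h2 : ((d (x * y) : ℤ) : ℝ) = ((d x + d y : ℤ) : ℝ) := by
        push_cast
        nlinarith
      exact_mod_cast h2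
    rw [hd_add, zpow_add]
    have : (x * y) b = x b * y b := rfl
    rw [this]
    exact mul_mul_mul_comm _ _ _ _
  · intro x
    by_cases hs : Function.Surjective ⇑x
    · obtain ⟨z, hz⟩ := hs (z₀ ^ d x * x b)
      exact ⟨z, hz⟩
    · rw [Function.Surjective] at hs
      push_neg at hs
      obtain ⟨p, hp⟩ := hs
      have h0 : windAux x = 0 := windAux_of_not_surj x (by rintro ⟨z, hz⟩; exact hp z hz)
      have h1 : (d x : ℝ) * (2 * Real.pi) = 0 := by rw [← hw x, h0]
      have h2 : d x = 0 := by
        have : (d x : ℝ) = 0 := by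
          rcases mul_eq_zero.mp h1 with h | h
          · exact h
          · linarith
        exact_mod_cast this
      rw [h2]
      exact ⟨b, by simp⟩
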